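/- arXiv:1611.06872 — 3 statements merged into one kernel-verified Lean document; each statement's English description precedes it below -/
import Mathlib

section
/- Let x, y, z be real numbers with x < 0 and |y| < z < |x|. Then e^{−y/2}·(2 cosh(z/2)) − e^{x/2}·(2 cosh(x/2)) > e^{−y} − e^{x} > 0. In particular σ(x,y,z) > 0 when x < 0. -/
open Real

/-- `σ(x,y,z) = sign(x)·( e^{x/2}·(2 cosh(x/2)) − e^{−y/2}·(2 cosh(z/2)) )` -/
noncomputable def sigmaK (x y z : ℝ) : ℝ :=
  Real.sign x *
    (Real.exp (x / 2) * (2 * Real.cosh (x / 2)) -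
      Real.exp (-y / 2) * (2 * Real.cosh (z / 2)))

theorem stmt1 (x y z : ℝ) (hx : x < 0) (hyz : |y| < z) (hzx : z < |x|) :
    (Real.exp (-y / 2) * (2 * Real.cosh (z / 2)) -
        Real.exp (x / 2) * (2 * Real.cosh (x / 2)) >
      Real.exp (-y) - Real.exp x) ∧
    Real.exp (-y) - Real.exp x > 0 ∧
    sigmaK x y z > 0 := by
  have habs : |x| = -x := abs_of_neg hx
  have hy1 : -z < y := (abs_lt.mp hyz).1
  have hy2 : y < z := (abs_lt.mp hyz).2
  have hA : Real.exp (x / 2) * (2 * Real.cosh (x / 2)) = Real.exp x + 1 := by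
    rw [Real.cosh_eq]
    have : Real.exp (x / 2) * Real.exp (x / 2) = Real.exp x := by
      rw [← Real.exp_add]; ring_nf
    have h0 : Real.exp (x / 2) * Real.exp (-(x / 2)) = 1 := by
      rw [← Real.exp_add]; simp
    nlinarith [this, h0]
  have hB : Real.exp (-y / 2) * (2 * Real.cosh (z / 2)) =
      Real.exp ((z - y) / 2) + Real.exp (-(y + z) / 2) := by
    rw [Real.cosh_eq]
    have h1 : Real.exp (-y / 2) * Real.exp (z / 2) = Real.exp ((z - y) / 2) := by
      rw [← Real.exp_add]; ring_nf
    have h2 : Real.exp (-y / 2) * Real.exp (-(z / 2)) = Real.exp (-(y + z) / 2) := by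
      rw [← Real.exp_add]; ring_nf
    nlinarith [h1, h2]
  have hmul : Real.exp ((z - y) / 2) * Real.exp (-(y + z) / 2) = Real.exp (-y) := by
    rw [← Real.exp_add]; ring_nf
  have hu : Real.exp ((z - y) / 2) > 1 := by
    rw [show (1 : ℝ) = Real.exp 0 by simp]
    exact Real.exp_lt_exp.mpr (by linarith)
  have hv : Real.exp (-(y + z) / 2) < 1 := by
    rw [show (1 : ℝ) = Real.exp 0 by simp]
    exact Real.exp_lt_exp.mpr (by linarith)
  have h2 : Real.exp (-y) - Real.exp x > 0 := by
    have : x < -y := by linarith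
    have := Real.exp_lt_exp.mpr this
    linarith
  have h1 : Real.exp (-y / 2) * (2 * Real.cosh (z / 2)) -
      Real.exp (x / 2) * (2 * Real.cosh (x / 2)) > Real.exp (-y) - Real.exp x := by
    rw [hA, hB]
    nlinarith [hmul, hu, hv]
  refine ⟨h1, h2, ?_⟩
  unfold sigmaK
  rw [Real.sign_of_neg hx]
  nlinarith [h1, h2]
end

section
/- Let k₁ > 0 and k₂ > 0 be real parameters, and let a, b be real numbers with 0 ≤ a < b. Then the integration-by-parts identity holds: (1/k₂) · ∫_a^b (cosh z − cosh a)^{k₁−1} · (cosh 2b − cosh 2z)^{k₂} · sinh z dz = (4/k₁) · ∫_a^b (cosh z − cosh a)^{k₁} · (cosh 2b − cosh 2z)^{k₂−1} · cosh z · sinh z dz. -/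
open Real intervalIntegral

theorem stmt6 (k₁ k₂ : ℝ) (hk₁ : 0 < k₁) (hk₂ : 0 < k₂)
    (a b : ℝ) (ha : 0 ≤ a) (hab : a < b) :
    (1 / k₂) * ∫ z in a..b,
        (Real.cosh z - Real.cosh a) ^ (k₁ - 1) *
          (Real.cosh (2 * b) - Real.cosh (2 * z)) ^ k₂ * Real.sinh z
      = (4 / k₁) * ∫ z in a..b,
          (Real.cosh z - Real.cosh a) ^ k₁ *
            (Real.cosh (2 * b) - Real.cosh (2 * z)) ^ (k₂ - 1) *
              Real.cosh z * Real.sinh z := by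
  set F : ℝ → ℝ := fun z => (Real.cosh z - Real.cosh a) ^ k₁ with hF
  set G : ℝ → ℝ := fun z => (Real.cosh (2 * b) - Real.cosh (2 * z)) ^ k₂ with hG
  set F' : ℝ → ℝ := fun z =>
    k₁ * ((Real.cosh z - Real.cosh a) ^ (k₁ - 1) * Real.sinh z) with hF'
  set G' : ℝ → ℝ := fun z =>
    -(4 * k₂) * ((Real.cosh (2 * b) - Real.cosh (2 * z)) ^ (k₂ - 1) *
      (Real.cosh z * Real.sinh z)) with hG'
  -- positivity facts on the open interval
  have hpos1 : ∀ z ∈ Set.Ioo a b, 0 < Real.cosh z - Real.cosh a := by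
    intro z hz
    have : Real.cosh a < Real.cosh z := by
      rw [Real.cosh_lt_cosh, abs_of_nonneg ha, abs_of_nonneg (ha.trans hz.1.le)]
      exact hz.1
    linarith
  have hpos2 : ∀ z ∈ Set.Ioo a b, 0 < Real.cosh (2 * b) - Real.cosh (2 * z) := by
    intro z hz
    have hz0 : 0 ≤ z := ha.trans hz.1.le
    have : Real.cosh (2 * z) < Real.cosh (2 * b) := by
      rw [Real.cosh_lt_cosh, abs_of_nonneg (by linarith : (0:ℝ) ≤ 2 * z),
        abs_of_nonneg (by linarith : (0:ℝ) ≤ 2 * b)]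
      linarith [hz.2]
    linarith
  have hsinh : ∀ z ∈ Set.Ioo a b, 0 ≤ Real.sinh z := fun z hz =>
    Real.sinh_nonneg_iff.mpr (ha.trans hz.1.le)
  have hcosh : ∀ z : ℝ, 0 < Real.cosh z := fun z => Real.cosh_pos (x := z)
  -- derivatives
  have hFd : ∀ z ∈ Set.Ioo a b, HasDerivAt F (F' z) z := by
    intro z hz
    have h := ((Real.hasDerivAt_cosh z).sub_const (Real.cosh a)).rpow_const
      (p := k₁) (Or.inl (hpos1 z hz).ne')
    convert h using 1
    simp only [hF']; ring
  have hGd : ∀ z ∈ Set.Ioo a b, HasDerivAt G (G' z) z := by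
    intro z hz
    have hinner : HasDerivAt (fun z : ℝ => Real.cosh (2 * b) - Real.cosh (2 * z))
        (-(Real.sinh (2 * z) * 2)) z := by
      have h2z : HasDerivAt (fun z : ℝ => 2 * z) 2 z := by
        simpa using (hasDerivAt_id z).const_mul 2
      exact ((Real.hasDerivAt_cosh (2 * z)).comp z h2z).const_sub (Real.cosh (2 * b))
    have h := hinner.rpow_const (p := k₂) (Or.inl (hpos2 z hz).ne')
    convert h using 1
    simp only [hG', Real.sinh_two_mul]; ring
  -- continuity
  have hFc : Continuous F :=
    (Real.continuous_cosh.sub continuous_const).rpow_const (fun x => Or.inr hk₁.le)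
  have hGc : Continuous G := by
    have : Continuous fun z : ℝ => Real.cosh (2 * b) - Real.cosh (2 * z) :=
      continuous_const.sub (Real.continuous_cosh.comp (continuous_const.mul continuous_id))
    exact this.rpow_const (fun x => Or.inr hk₂.le)
  -- integrability of F'
  have hF'int : IntervalIntegrable F' MeasureTheory.volume a b := by
    apply intervalIntegrable_deriv_of_nonneg (g := F) hFc.continuousOn
    · rw [min_eq_left hab.le, max_eq_right hab.le]; exact hFd
    · rw [min_eq_left hab.le, max_eq_right hab.le]
      intro z hz
      simp only [hF']
      exact mul_nonneg hk₁.le (mul_nonneg (Real.rpow_nonneg (hpos1 z hz).le _) (hsinh z hz))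
  -- integrability of G' (via -G having nonneg derivative -G')
  have hG'int : IntervalIntegrable G' MeasureTheory.volume a b := by
    have h1 : IntervalIntegrable (fun z => -G' z) MeasureTheory.volume a b := by
      apply intervalIntegrable_deriv_of_nonneg (g := fun z => -G z) hGc.neg.continuousOn
      · rw [min_eq_left hab.le, max_eq_right hab.le]
        exact fun z hz => (hGd z hz).neg
      · rw [min_eq_left hab.le, max_eq_right hab.le]
        intro z hz
        simp only [hG', neg_neg, neg_mul]
        exact mul_nonneg (by positivity) (mul_nonneg (Real.rpow_nonneg (hpos2 z hz).le _)
          (mul_nonneg (hcosh z).le (hsinh z hz)))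
    have h2 : G' = fun z => -(-G' z) := by funext z; ring
    rw [h2]; exact h1.neg
  have hA : IntervalIntegrable (fun z => F' z * G z) MeasureTheory.volume a b :=
    hF'int.mul_continuousOn hGc.continuousOn
  have hB : IntervalIntegrable (fun z => F z * G' z) MeasureTheory.volume a b :=
    hG'int.continuousOn_mul hFc.continuousOn
  -- FTC
  have h0 : (∫ z in a..b, (F' z * G z + F z * G' z)) = F b * G b - F a * G a :=
    integral_eq_sub_of_hasDerivAt_of_le hab.le ((hFc.mul hGc).continuousOn)
      (fun z hz => (hFd z hz).mul (hGd z hz)) (hA.add hB)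
  have hFa : F a = 0 := by simp [hF, Real.zero_rpow hk₁.ne']
  have hGb : G b = 0 := by simp [hG, Real.zero_rpow hk₂.ne']
  rw [integral_add hA hB, hFa, hGb, mul_zero, zero_mul, sub_zero] at h0
  -- rewrite the two integrals
  have e1 : (fun z => F' z * G z) = fun z =>
      k₁ * ((Real.cosh z - Real.cosh a) ^ (k₁ - 1) *
        (Real.cosh (2 * b) - Real.cosh (2 * z)) ^ k₂ * Real.sinh z) := by
    funext z; simp only [hF', hG]; ring
  have e2 : (fun z => F z * G' z) = fun z =>
      -(4 * k₂) * ((Real.cosh z - Real.cosh a) ^ k₁ *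
        (Real.cosh (2 * b) - Real.cosh (2 * z)) ^ (k₂ - 1) *
          Real.cosh z * Real.sinh z) := by
    funext z; simp only [hF, hG']; ring
  rw [e1, e2, intervalIntegral.integral_const_mul, intervalIntegral.integral_const_mul] at h0
  have hk₁' : k₁ ≠ 0 := hk₁.ne'
  have hk₂' : k₂ ≠ 0 := hk₂.ne'
  rw [div_mul_eq_mul_div, div_mul_eq_mul_div, div_eq_div_iff hk₂' hk₁']
  linear_combination h0
end

section
/- Let k₁ > 0 and k₂ > 0 be real parameters, and let a, b be real numbers with 0 ≤ a < b. Then the double integral identity holds: 2 · ∫_a^b sinh(2w) · ( ∫_a^w (cosh z − cosh a)^{k₁−1} · (cosh 2w − cosh 2z)^{k₂−1} · sinh z dz ) dw = (1/k₂) · ∫_a^b (cosh z − cosh a)^{k₁−1} · (cosh 2b − cosh 2z)^{k₂} · sinh z dz. -/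
open Real intervalIntegral

open MeasureTheory in
lemma coshAux (m u v k : ℝ) (hm : 0 < m) (hu : 0 ≤ u) (huv : u ≤ v) (hk : 0 < k) :
    IntegrableOn (fun w => Real.sinh (m*w) * (Real.cosh (m*w) - Real.cosh (m*u)) ^ (k-1))
      (Set.Ioc u v) ∧
    ∫ w in Set.Ioc u v, Real.sinh (m*w) * (Real.cosh (m*w) - Real.cosh (m*u)) ^ (k-1)
      = (Real.cosh (m*v) - Real.cosh (m*u)) ^ k / (m * k) := by
  set C := Real.cosh (m*u) with hC
  set D := Real.cosh (m*v) with hD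
  set g : ℝ → ℝ := fun y => (y - C) ^ (k-1) with hg
  have hCD : C ≤ D := by
    rw [hC, hD, Real.cosh_le_cosh, abs_of_nonneg (by positivity), abs_of_nonneg (by nlinarith)]
    nlinarith
  have hder : ∀ w ∈ Set.Ioo u v, HasDerivWithinAt (fun w => Real.cosh (m*w))
      (m * Real.sinh (m*w)) (Set.Ioo u v) w := by
    intro w _
    have h1 : HasDerivAt (fun w : ℝ => Real.cosh (m*w)) (Real.sinh (m*w) * m) w := by
      exact (Real.hasDerivAt_cosh (m*w)).comp w (by simpa using (hasDerivAt_id w).const_mul m)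
    exact (h1.hasDerivWithinAt).congr_deriv (mul_comm _ _)
  have hinj : Set.InjOn (fun w => Real.cosh (m*w)) (Set.Ioo u v) := by
    have hsm : StrictMonoOn (fun w => Real.cosh (m*w)) (Set.Ioo u v) := by
      intro x hx y hy hxy
      rw [Real.cosh_lt_cosh, abs_of_nonneg (by nlinarith [hx.1]), abs_of_nonneg (by nlinarith [hy.1])]
      nlinarith
    exact hsm.injOn
  have himg : (fun w => Real.cosh (m*w)) '' Set.Ioo u v = Set.Ioo C D := by
    apply subset_antisymm
    · rintro _ ⟨w, hw, rfl⟩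
      constructor
      · rw [hC, Real.cosh_lt_cosh, abs_of_nonneg (by positivity),
          abs_of_nonneg (by nlinarith [hw.1])]
        nlinarith [hw.1]
      · rw [hD, Real.cosh_lt_cosh, abs_of_nonneg (by nlinarith [hw.1]),
          abs_of_nonneg (by nlinarith [hw.1, hw.2])]
        nlinarith [hw.2, hw.1]
    · exact intermediate_value_Ioo huv
        (((Real.continuous_cosh).comp (continuous_const.mul continuous_id)).continuousOn)
  have hgi : IntervalIntegrable g volume C D := by
    have h0 : IntervalIntegrable (fun x : ℝ => x ^ (k-1)) volume (C - C) (D - C) :=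
      intervalIntegrable_rpow' (by linarith)
    have := h0.comp_sub_right C
    simpa [hg, sub_add_cancel] using this
  have hgint : IntegrableOn g (Set.Ioo C D) :=
    ((intervalIntegrable_iff_integrableOn_Ioc_of_le hCD).1 hgi).mono_set Set.Ioo_subset_Ioc_self
  have hgval : ∫ y in Set.Ioo C D, g y = (D - C) ^ k / k := by
    rw [← integral_Ioc_eq_integral_Ioo, ← intervalIntegral.integral_of_le hCD, hg,
      intervalIntegral.integral_comp_sub_right (fun y => y ^ (k-1)) C, sub_self,
      integral_rpow (Or.inl (by linarith)), sub_add_cancel,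
      Real.zero_rpow hk.ne']
    ring
  have heqon : Set.EqOn (fun w => |m * Real.sinh (m*w)| • g (Real.cosh (m*w)))
      (fun w => m * (Real.sinh (m*w) * (Real.cosh (m*w) - C) ^ (k-1))) (Set.Ioo u v) := by
    intro w hw
    have hs : 0 ≤ Real.sinh (m*w) := Real.sinh_nonneg_iff.2 (by nlinarith [hw.1])
    simp only [smul_eq_mul, hg]
    rw [abs_of_nonneg (by positivity)]
    ring
  have hint : IntegrableOn
      (fun w => Real.sinh (m*w) * (Real.cosh (m*w) - C) ^ (k-1)) (Set.Ioo u v) := by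
    have h1 := (integrableOn_image_iff_integrableOn_abs_deriv_smul measurableSet_Ioo hder hinj g).1
      (himg ▸ hgint)
    have h2 : IntegrableOn
        (fun w => m * (Real.sinh (m*w) * (Real.cosh (m*w) - C) ^ (k-1))) (Set.Ioo u v) :=
      h1.congr_fun heqon measurableSet_Ioo
    have h3 := h2.const_mul (1/m)
    apply MeasureTheory.IntegrableOn.congr_fun h3 _ measurableSet_Ioo
    intro w _
    field_simp
  have hval : ∫ w in Set.Ioo u v, Real.sinh (m*w) * (Real.cosh (m*w) - C) ^ (k-1)
      = (D - C) ^ k / (m * k) := by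
    have key := integral_image_eq_integral_abs_deriv_smul measurableSet_Ioo hder hinj g
    rw [himg, hgval, setIntegral_congr_fun measurableSet_Ioo heqon,
      MeasureTheory.integral_const_mul] at key
    have hm' : m ≠ 0 := hm.ne'
    field_simp at key ⊢
    linarith [key]
  constructor
  · exact (integrableOn_Ioc_iff_integrableOn_Ioo).2 hint
  · rw [integral_Ioc_eq_integral_Ioo, hval]

noncomputable def Tf (k₁ k₂ a : ℝ) (z w : ℝ) : ℝ :=
  if z ≤ w then Real.sinh (2*w) * ((Real.cosh z - Real.cosh a) ^ (k₁-1) *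
    (Real.cosh (2*w) - Real.cosh (2*z)) ^ (k₂-1) * Real.sinh z) else 0

theorem stmt8 (k₁ k₂ : ℝ) (hk₁ : 0 < k₁) (hk₂ : 0 < k₂)
    (a b : ℝ) (ha : 0 ≤ a) (hab : a < b) :
    2 * ∫ w in a..b, Real.sinh (2 * w) *
        ∫ z in a..w,
          (Real.cosh z - Real.cosh a) ^ (k₁ - 1) *
            (Real.cosh (2 * w) - Real.cosh (2 * z)) ^ (k₂ - 1) * Real.sinh z
      = (1 / k₂) * ∫ z in a..b,
          (Real.cosh z - Real.cosh a) ^ (k₁ - 1) *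
            (Real.cosh (2 * b) - Real.cosh (2 * z)) ^ k₂ * Real.sinh z := by
  classical
  set μ := MeasureTheory.volume.restrict (Set.Ioc a b) with hμ
  -- z-integrability
  have hzint : MeasureTheory.IntegrableOn
      (fun z => Real.sinh z * (Real.cosh z - Real.cosh a) ^ (k₁-1)) (Set.Ioc a b) := by
    have := (coshAux 1 a b k₁ one_pos ha hab.le hk₁).1
    simpa using this
  have hw : ∀ z : ℝ, 0 ≤ z → z ≤ b →
      MeasureTheory.IntegrableOn
        (fun w => Real.sinh (2*w) * (Real.cosh (2*w) - Real.cosh (2*z)) ^ (k₂-1))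
        (Set.Ioc z b) ∧
      ∫ w in Set.Ioc z b, Real.sinh (2*w) * (Real.cosh (2*w) - Real.cosh (2*z)) ^ (k₂-1)
        = (Real.cosh (2*b) - Real.cosh (2*z)) ^ k₂ / (2 * k₂) :=
    fun z hz0 hzb => coshAux 2 z b k₂ two_pos hz0 hzb hk₂
  have hind : ∀ z : ℝ, (fun w => Tf k₁ k₂ a z w) = (Set.Ici z).indicator
      (fun w => Real.sinh (2*w) * ((Real.cosh z - Real.cosh a) ^ (k₁-1) *
        (Real.cosh (2*w) - Real.cosh (2*z)) ^ (k₂-1) * Real.sinh z)) := by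
    intro z; funext w
    simp [Tf, Set.indicator_apply, Set.mem_Ici]
  have hIcc : ∀ z ∈ Set.Ioc a b, Set.Ici z ∩ Set.Ioc a b = Set.Icc z b := by
    intro z hz
    ext w
    simp only [Set.mem_inter_iff, Set.mem_Ici, Set.mem_Ioc, Set.mem_Icc]
    constructor
    · rintro ⟨h1, _, h3⟩; exact ⟨h1, h3⟩
    · rintro ⟨h1, h2⟩; exact ⟨h1, lt_of_lt_of_le hz.1 h1, h2⟩
  -- inner integral computation
  have hinner : ∀ z ∈ Set.Ioc a b, ∫ w, Tf k₁ k₂ a z w ∂μ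
      = (Real.cosh z - Real.cosh a) ^ (k₁-1) * Real.sinh z *
        ((Real.cosh (2*b) - Real.cosh (2*z)) ^ k₂ / (2*k₂)) := by
    intro z hz
    have hz0 : 0 ≤ z := le_trans ha hz.1.le
    have e2 : ∫ w in Set.Ioc z b, Real.sinh (2*w) * ((Real.cosh z - Real.cosh a) ^ (k₁-1) *
        (Real.cosh (2*w) - Real.cosh (2*z)) ^ (k₂-1) * Real.sinh z)
        = ∫ w in Set.Ioc z b, ((Real.cosh z - Real.cosh a) ^ (k₁-1) * Real.sinh z) *
          (Real.sinh (2*w) * (Real.cosh (2*w) - Real.cosh (2*z)) ^ (k₂-1)) :=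
      MeasureTheory.setIntegral_congr_fun measurableSet_Ioc (fun w _ => by ring)
    rw [hind z, MeasureTheory.integral_indicator measurableSet_Ici, hμ,
      MeasureTheory.Measure.restrict_restrict measurableSet_Ici, hIcc z hz,
      MeasureTheory.integral_Icc_eq_integral_Ioc, e2,
      MeasureTheory.integral_const_mul, (hw z hz0 hz.2).2]
  -- nonnegativity
  have hTnn : ∀ z ∈ Set.Ioc a b, ∀ w : ℝ, 0 ≤ Tf k₁ k₂ a z w := by
    intro z hz w
    unfold Tf
    split
    · rename_i h
      have hz0 : 0 ≤ z := le_trans ha hz.1.le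
      have hw0 : 0 ≤ w := le_trans hz0 h
      have h1 : Real.cosh a ≤ Real.cosh z := by
        rw [Real.cosh_le_cosh, abs_of_nonneg ha, abs_of_nonneg hz0]; exact hz.1.le
      have h2 : Real.cosh (2*z) ≤ Real.cosh (2*w) := by
        rw [Real.cosh_le_cosh, abs_of_nonneg (by linarith), abs_of_nonneg (by linarith)]
        linarith
      have h5 : 0 ≤ Real.sinh z := Real.sinh_nonneg_iff.2 hz0
      have h6 : 0 ≤ Real.sinh (2*w) := Real.sinh_nonneg_iff.2 (by positivity)
      exact mul_nonneg h6 (mul_nonneg (mul_nonneg (Real.rpow_nonneg (by linarith) _)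
        (Real.rpow_nonneg (by linarith) _)) h5)
    · exact le_refl 0
  -- measurability
  have hTmeas : Measurable (Function.uncurry (Tf k₁ k₂ a)) := by
    have huncurry : Function.uncurry (Tf k₁ k₂ a) = fun p : ℝ × ℝ =>
        if p.1 ≤ p.2 then Real.sinh (2*p.2) * ((Real.cosh p.1 - Real.cosh a) ^ (k₁-1) *
          (Real.cosh (2*p.2) - Real.cosh (2*p.1)) ^ (k₂-1) * Real.sinh p.1) else 0 := rfl
    rw [huncurry]
    apply Measurable.ite (measurableSet_le measurable_fst measurable_snd) _ measurable_const
    exact (Real.measurable_sinh.comp (measurable_const.mul measurable_snd)).mul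
      (((((Real.measurable_cosh.comp measurable_fst).sub measurable_const).pow_const _).mul
        (((Real.measurable_cosh.comp (measurable_const.mul measurable_snd)).sub
          (Real.measurable_cosh.comp (measurable_const.mul measurable_fst))).pow_const _)).mul
        (Real.measurable_sinh.comp measurable_fst))
  have hTaesm : MeasureTheory.AEStronglyMeasurable (Function.uncurry (Tf k₁ k₂ a)) (μ.prod μ) :=
    hTmeas.aestronglyMeasurable
  -- slice integrability
  have hslice : ∀ z ∈ Set.Ioc a b, MeasureTheory.Integrable (fun w => Tf k₁ k₂ a z w) μ := by
    intro z hz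
    have hz0 : 0 ≤ z := le_trans ha hz.1.le
    rw [hind z, MeasureTheory.integrable_indicator_iff measurableSet_Ici,
      MeasureTheory.IntegrableOn, hμ,
      MeasureTheory.Measure.restrict_restrict measurableSet_Ici, hIcc z hz,
      ← MeasureTheory.IntegrableOn, integrableOn_Icc_iff_integrableOn_Ioc]
    have h1 := ((hw z hz0 hz.2).1.const_mul
      ((Real.cosh z - Real.cosh a) ^ (k₁-1) * Real.sinh z))
    exact MeasureTheory.IntegrableOn.congr_fun h1 (fun w _ => by ring) measurableSet_Ioc
  -- integrability of the dominating function
  have hM : MeasureTheory.IntegrableOn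
      (fun z => (Real.cosh z - Real.cosh a) ^ (k₁-1) * Real.sinh z *
        ((Real.cosh (2*b) - Real.cosh (2*z)) ^ k₂ / (2*k₂))) (Set.Ioc a b) := by
    apply MeasureTheory.Integrable.mono'
      (hzint.const_mul ((Real.cosh (2*b)) ^ k₂ / (2*k₂)))
    · apply Measurable.aestronglyMeasurable
      exact (((Real.measurable_cosh.sub measurable_const).pow_const _).mul
        Real.measurable_sinh).mul
        (((measurable_const.sub
          (Real.measurable_cosh.comp (measurable_const.mul measurable_id))).pow_const _).div_const _)
    · filter_upwards [MeasureTheory.self_mem_ae_restrict measurableSet_Ioc] with z hz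
      have hz0 : 0 ≤ z := le_trans ha hz.1.le
      have h1 : Real.cosh a ≤ Real.cosh z := by
        rw [Real.cosh_le_cosh, abs_of_nonneg ha, abs_of_nonneg hz0]; exact hz.1.le
      have hb0 : 0 ≤ b := le_trans ha hab.le
      have h2 : Real.cosh (2*z) ≤ Real.cosh (2*b) := by
        rw [Real.cosh_le_cosh, abs_of_nonneg (by linarith), abs_of_nonneg (by linarith)]
        linarith [hz.2]
      have h3 : 0 < Real.cosh (2*z) := Real.cosh_pos _
      have h4 : (Real.cosh (2*b) - Real.cosh (2*z)) ^ k₂ ≤ (Real.cosh (2*b)) ^ k₂ :=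
        Real.rpow_le_rpow (by linarith) (by linarith) hk₂.le
      have h5 : 0 ≤ Real.sinh z := Real.sinh_nonneg_iff.2 hz0
      have h6 : 0 ≤ (Real.cosh z - Real.cosh a) ^ (k₁-1) := Real.rpow_nonneg (by linarith) _
      have h7 : 0 ≤ (Real.cosh (2*b) - Real.cosh (2*z)) ^ k₂ := Real.rpow_nonneg (by linarith) _
      rw [Real.norm_of_nonneg (mul_nonneg (mul_nonneg h6 h5)
        (div_nonneg h7 (by linarith)))]
      calc (Real.cosh z - Real.cosh a) ^ (k₁-1) * Real.sinh z *
            ((Real.cosh (2*b) - Real.cosh (2*z)) ^ k₂ / (2*k₂))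
          ≤ (Real.cosh z - Real.cosh a) ^ (k₁-1) * Real.sinh z *
            ((Real.cosh (2*b)) ^ k₂ / (2*k₂)) := by
            have h8 : (Real.cosh (2*b) - Real.cosh (2*z)) ^ k₂ / (2*k₂)
                ≤ (Real.cosh (2*b)) ^ k₂ / (2*k₂) := by gcongr
            exact mul_le_mul_of_nonneg_left h8 (mul_nonneg h6 h5)
        _ = (Real.cosh (2*b)) ^ k₂ / (2*k₂) *
            (Real.sinh z * (Real.cosh z - Real.cosh a) ^ (k₁-1)) := by ring
  -- Fubini integrability
  have hTint : MeasureTheory.Integrable (Function.uncurry (Tf k₁ k₂ a)) (μ.prod μ) := by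
    rw [MeasureTheory.integrable_prod_iff hTaesm]
    constructor
    · filter_upwards [MeasureTheory.self_mem_ae_restrict measurableSet_Ioc] with z hz
      exact hslice z hz
    · apply MeasureTheory.Integrable.congr hM
      filter_upwards [MeasureTheory.self_mem_ae_restrict measurableSet_Ioc] with z hz
      rw [← hinner z hz]
      exact MeasureTheory.integral_congr_ae (Filter.Eventually.of_forall fun w =>
        (Real.norm_of_nonneg (hTnn z hz w)).symm)
  -- main computation
  rw [intervalIntegral.integral_of_le hab.le, intervalIntegral.integral_of_le hab.le]
  have step1 : ∫ w in Set.Ioc a b, (Real.sinh (2*w) *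
      ∫ z in a..w, (Real.cosh z - Real.cosh a) ^ (k₁-1) *
        (Real.cosh (2*w) - Real.cosh (2*z)) ^ (k₂-1) * Real.sinh z)
      = ∫ w, (∫ z, Tf k₁ k₂ a z w ∂μ) ∂μ := by
    apply MeasureTheory.setIntegral_congr_fun measurableSet_Ioc
    intro w hw
    show Real.sinh (2*w) * (∫ z in a..w, (Real.cosh z - Real.cosh a) ^ (k₁-1) *
        (Real.cosh (2*w) - Real.cosh (2*z)) ^ (k₂-1) * Real.sinh z)
      = ∫ z, Tf k₁ k₂ a z w ∂μ
    have haw : a ≤ w := hw.1.le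
    have e3 : (fun z => Tf k₁ k₂ a z w) = (Set.Iic w).indicator
        (fun z => Real.sinh (2*w) * ((Real.cosh z - Real.cosh a) ^ (k₁-1) *
          (Real.cosh (2*w) - Real.cosh (2*z)) ^ (k₂-1) * Real.sinh z)) := by
      funext z
      simp [Tf, Set.indicator_apply, Set.mem_Iic]
    rw [intervalIntegral.integral_of_le haw, ← MeasureTheory.integral_const_mul, e3,
      MeasureTheory.integral_indicator measurableSet_Iic, hμ,
      MeasureTheory.Measure.restrict_restrict measurableSet_Iic,
      Set.inter_comm (Set.Iic w) (Set.Ioc a b), Set.Ioc_inter_Iic, min_eq_right hw.2]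
  have step3 : ∫ z, (∫ w, Tf k₁ k₂ a z w ∂μ) ∂μ
      = ∫ z in Set.Ioc a b, ((Real.cosh z - Real.cosh a) ^ (k₁-1) * Real.sinh z *
        ((Real.cosh (2*b) - Real.cosh (2*z)) ^ k₂ / (2*k₂))) := by
    exact MeasureTheory.setIntegral_congr_fun measurableSet_Ioc (fun z hz => hinner z hz)
  rw [step1, ← MeasureTheory.integral_integral_swap hTint, step3,
    ← MeasureTheory.integral_const_mul, ← MeasureTheory.integral_const_mul]
  apply MeasureTheory.setIntegral_congr_fun measurableSet_Ioc
  intro z _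
  have hk₂' : k₂ ≠ 0 := hk₂.ne'
  field_simp
end
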